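/- Let f : ℕ → ℝ be an arithmetic function with f(1) = 1 such that f(n) = 0 for all even n. Assume there exist C > 0 and γ ∈ ℝ such that |f(n)| ≤ C n^γ for all n ≥ 2, and let ς > 1 be the real number satisfying (1 − 2^{-ς}) ζ(ς) = 1/C + 1, where ζ is the Riemann zeta function. Then for all n ≥ 2, the Dirichlet inverse satisfies |f⁻¹(n)| ≤ n^{γ+ς}. -/

import Mathlib

set_option maxHeartbeats 1000000


theorem stmt19 (f g : ℕ → ℝ) (hf1 : f 1 = 1)
    (hfeven : ∀ n : ℕ, Even n → f n = 0)
    (hginv : ∀ n : ℕ, 0 < n →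
      ∑ d ∈ n.divisors, f (n / d) * g d = if n = 1 then 1 else 0)
    (C : ℝ) (hC : 0 < C) (γ : ℝ)
    (hf : ∀ n : ℕ, 2 ≤ n → |f n| ≤ C * (n : ℝ) ^ γ)
    (ς : ℝ) (hς : 1 < ς)
    (hzeta : (1 - (2 : ℝ) ^ (-ς)) * ∑' m : ℕ, (m : ℝ) ^ (-ς) = 1 / C + 1) :
    ∀ n : ℕ, 2 ≤ n → |g n| ≤ (n : ℝ) ^ (γ + ς) := by
  have hS : Summable (fun m : ℕ => (m : ℝ) ^ (-ς)) :=
    Real.summable_nat_rpow.mpr (by linarith)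
  set G : ℕ → ℝ := fun m => if Odd m ∧ 3 ≤ m then (m : ℝ) ^ (-ς) else 0 with hG
  have hGnonneg : ∀ m, 0 ≤ G m := by
    intro m; simp only [hG]; split
    · positivity
    · exact le_refl 0
  have hGle : ∀ m, G m ≤ (m : ℝ) ^ (-ς) := by
    intro m; simp only [hG]; split
    · exact le_refl _
    · positivity
  have hGsum : Summable G := Summable.of_nonneg_of_le hGnonneg hGle hS
  -- compute tsum G = 1 / C
  have hinj2 : Function.Injective (fun k : ℕ => 2 * k) := fun a b h => by simp only [] at h; omega
  have hinjodd : Function.Injective (fun k : ℕ => 2 * k + 1) := fun a b h => by simp only [] at h; omega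
  have he : Summable (fun k : ℕ => ((2 * k : ℕ) : ℝ) ^ (-ς)) := hS.comp_injective hinj2
  have ho : Summable (fun k : ℕ => ((2 * k + 1 : ℕ) : ℝ) ^ (-ς)) := hS.comp_injective hinjodd
  have hodd : ∑' k : ℕ, ((2 * k + 1 : ℕ) : ℝ) ^ (-ς) = 1 / C + 1 := by
    have h1 := tsum_even_add_odd (f := fun m : ℕ => (m : ℝ) ^ (-ς)) he ho
    have h2 : ∑' k : ℕ, ((2 * k : ℕ) : ℝ) ^ (-ς)
        = (2 : ℝ) ^ (-ς) * ∑' k : ℕ, ((k : ℕ) : ℝ) ^ (-ς) := by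
      rw [← tsum_mul_left]
      congr 1; funext k
      push_cast
      rw [Real.mul_rpow (by norm_num) (by positivity)]
    rw [h2] at h1
    have := hzeta
    push_cast at h1 ⊢
    nlinarith [h1, this]
  have hodd3 : ∑' k : ℕ, ((2 * k + 3 : ℕ) : ℝ) ^ (-ς) = 1 / C := by
    have h0 := Summable.tsum_eq_zero_add ho
    have e : ∀ k : ℕ, 2 * (k + 1) + 1 = 2 * k + 3 := by omega
    simp only [e] at h0
    norm_num [Real.one_rpow] at h0
    push_cast at hodd ⊢
    rw [hodd] at h0
    linarith
  have hinj3 : Function.Injective (fun k : ℕ => 2 * k + 3) := fun a b h => by simp only [] at h; omega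
  have hGtsum : ∑' m : ℕ, G m = 1 / C := by
    have hsupp : Function.support G ⊆ Set.range (fun k : ℕ => 2 * k + 3) := by
      intro m hm
      have hm' : G m ≠ 0 := hm
      have : Odd m ∧ 3 ≤ m := by
        by_contra h
        simp only [hG, if_neg h] at hm'
        exact hm' rfl
      obtain ⟨⟨j, hj⟩, h3⟩ := this
      refine ⟨j - 1, ?_⟩
      show 2 * (j - 1) + 3 = m
      omega
    have := hinj3.tsum_eq hsupp
    rw [← this, ← hodd3]
    congr 1; funext k
    have : Odd (2 * k + 3) ∧ 3 ≤ 2 * k + 3 := ⟨⟨k + 1, by omega⟩, by omega⟩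
    simp only [hG, if_pos this]
  -- g 1 = 1
  have hg1 : g 1 = 1 := by
    have := hginv 1 one_pos
    simpa [hf1] using this
  -- main induction
  intro n
  induction n using Nat.strong_induction_on with
  | _ n IH =>
    intro hn2
    have hn0 : 0 < n := by omega
    have hgd : ∀ d ∈ n.divisors.erase n, |g d| ≤ (d : ℝ) ^ (γ + ς) := by
      intro d hd
      obtain ⟨hdn, hdvd⟩ := Finset.mem_erase.mp hd
      have hdd := (Nat.mem_divisors.mp hdvd).1
      have hdpos : 0 < d := Nat.pos_of_mem_divisors hdvd
      by_cases hd1 : d = 1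
      · subst hd1; rw [hg1]; simp
      · have h2d : 2 ≤ d := by omega
        exact IH d (lt_of_le_of_ne (Nat.le_of_dvd hn0 hdd) hdn) h2d
    have heq := hginv n hn0
    rw [if_neg (by omega)] at heq
    have hmem : n ∈ n.divisors := Nat.mem_divisors_self n (by omega)
    rw [← Finset.add_sum_erase _ _ hmem, Nat.div_self hn0, hf1, one_mul] at heq
    have hgn : g n = -∑ d ∈ n.divisors.erase n, f (n / d) * g d := by linarith
    have hNpos : (0 : ℝ) < (n : ℝ) := by exact_mod_cast hn0
    have key : ∀ d ∈ n.divisors.erase n,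
        |f (n / d) * g d| ≤ C * (n : ℝ) ^ (γ + ς) * G (n / d) := by
      intro d hd
      obtain ⟨hdn, hdvd⟩ := Finset.mem_erase.mp hd
      have hdd := (Nat.mem_divisors.mp hdvd).1
      have hdpos : 0 < d := Nat.pos_of_mem_divisors hdvd
      set m := n / d with hmdef
      have hmul : m * d = n := Nat.div_mul_cancel hdd
      have hm2 : 2 ≤ m := by
        rcases Nat.lt_or_ge m 2 with h | h
        · interval_cases m <;> omega
        · exact h
      rcases Nat.even_or_odd m with hev | hodd'
      · rw [hfeven m hev, zero_mul, abs_zero]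
        have := hGnonneg m
        positivity
      · have h3m : 3 ≤ m := by
          rcases hodd' with ⟨j, hj⟩; omega
        have hGm : G m = (m : ℝ) ^ (-ς) := by
          simp only [hG]
          rw [if_pos (⟨hodd', h3m⟩ : Odd m ∧ 3 ≤ m)]
        have hMpos : (0 : ℝ) < (m : ℝ) := by exact_mod_cast (by omega : 0 < m)
        have hDpos : (0 : ℝ) < (d : ℝ) := by exact_mod_cast hdpos
        have hMD : (m : ℝ) * (d : ℝ) = (n : ℝ) := by exact_mod_cast hmul
        have hb1 : |f m| ≤ C * (m : ℝ) ^ γ := hf m hm2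
        have hb2 : |g d| ≤ (d : ℝ) ^ (γ + ς) := hgd d hd
        have hstep : |f m * g d| ≤ (C * (m : ℝ) ^ γ) * ((d : ℝ) ^ (γ + ς)) := by
          rw [abs_mul]
          exact mul_le_mul hb1 hb2 (abs_nonneg _) (by positivity)
        have hrw : (C * (m : ℝ) ^ γ) * ((d : ℝ) ^ (γ + ς))
            = C * (n : ℝ) ^ (γ + ς) * (m : ℝ) ^ (-ς) := by
          have h1 : (n : ℝ) ^ (γ + ς) = (m : ℝ) ^ (γ + ς) * (d : ℝ) ^ (γ + ς) := by
            rw [← hMD, Real.mul_rpow hMpos.le hDpos.le]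
          have h2 : (m : ℝ) ^ (γ + ς) * (m : ℝ) ^ (-ς) = (m : ℝ) ^ γ := by
            rw [← Real.rpow_add hMpos]; ring_nf
          rw [h1, ← h2]; ring
        rw [hGm]
        calc |f m * g d| ≤ (C * (m : ℝ) ^ γ) * ((d : ℝ) ^ (γ + ς)) := hstep
          _ = C * (n : ℝ) ^ (γ + ς) * (m : ℝ) ^ (-ς) := hrw
    have hsumG : ∑ d ∈ n.divisors.erase n, G (n / d) ≤ 1 / C := by
      have hinjdiv : ∀ d ∈ n.divisors.erase n, ∀ d' ∈ n.divisors.erase n,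
          n / d = n / d' → d = d' := by
        intro d hd d' hd' h
        have hdd := (Nat.mem_divisors.mp (Finset.mem_of_mem_erase hd)).1
        have hdd' := (Nat.mem_divisors.mp (Finset.mem_of_mem_erase hd')).1
        have e1 : n / (n / d) = d := Nat.div_div_self hdd hn0.ne'
        have e2 : n / (n / d') = d' := Nat.div_div_self hdd' hn0.ne'
        rw [← e1, ← e2, h]
      rw [← Finset.sum_image hinjdiv]
      rw [← hGtsum]
      exact Summable.sum_le_tsum _ (fun i _ => hGnonneg i) hGsum
    calc |g n| = |∑ d ∈ n.divisors.erase n, f (n / d) * g d| := by rw [hgn, abs_neg]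
      _ ≤ ∑ d ∈ n.divisors.erase n, |f (n / d) * g d| := Finset.abs_sum_le_sum_abs _ _
      _ ≤ ∑ d ∈ n.divisors.erase n, C * (n : ℝ) ^ (γ + ς) * G (n / d) :=
          Finset.sum_le_sum key
      _ = C * (n : ℝ) ^ (γ + ς) * ∑ d ∈ n.divisors.erase n, G (n / d) := by
          rw [Finset.mul_sum]
      _ ≤ C * (n : ℝ) ^ (γ + ς) * (1 / C) := by
          apply mul_le_mul_of_nonneg_left hsumG
          positivity
      _ = (n : ℝ) ^ (γ + ς) := by field_simp
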